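/- arXiv:1607.00472 — 8 statements merged into one kernel-verified Lean document; each statement's English description precedes it below -/
import Mathlib

section
/- For every n ≥ 3, the cycle graph C_n satisfies b•(C_n) = 0 if n is even and b•(C_n) = 1 if n is odd. In particular, when n is odd every energy orientation of C_n has at least one black arc, and some energy orientation of C_n has exactly one black arc. -/
/-- `D` is an orientation of the simple graph `G`: each edge of `G` receives exactly one
direction, and the arcs of `D` are exactly the directed edges of `G`. -/
def IsOrientation {V : Type*} (G : SimpleGraph V) (D : V → V → Prop) : Prop :=
  (∀ u v, D u v → G.Adj u v) ∧
  (∀ u v, G.Adj u v → (D u v ∨ D v u)) ∧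
  (∀ u v, D u v → ¬ D v u)

/-- An energy orientation of `G` is an orientation whose resulting digraph is acyclic,
i.e. contains no directed cycle. -/
def IsEnergyOrientation {V : Type*} (G : SimpleGraph V) (D : V → V → Prop) : Prop :=
  IsOrientation G D ∧ ∀ v, ¬ Relation.TransGen D v v

/-- A source of the digraph `D` is a vertex of in-degree `0`. -/
def IsSource {V : Type*} (D : V → V → Prop) (s : V) : Prop :=
  ∀ u, ¬ D u s

/-- `StepsTo D k u v` means there is a directed walk of length `k` from `u` to `v` in `D`. -/
def StepsTo {V : Type*} (D : V → V → Prop) : ℕ → V → V → Prop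
  | 0, u, v => u = v
  | k + 1, u, v => ∃ w, D u w ∧ StepsTo D k w v

/-- `edist D v` is the minimum, over all sources `s` of `D`, of the length of a shortest
directed path from `s` to `v`. -/
noncomputable def edist {V : Type*} (D : V → V → Prop) (v : V) : ℕ :=
  sInf {k : ℕ | ∃ s, IsSource D s ∧ StepsTo D k s v}

/-- An arc `(u, v)` of `D` is a black arc if it lies on no shortest directed path from a source
to `v`, equivalently if `edist D v ≠ edist D u + 1`. -/
def IsBlackArc {V : Type*} (D : V → V → Prop) (u v : V) : Prop :=
  D u v ∧ edist D v ≠ edist D u + 1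

/-- The number of black arcs of the digraph `D`. -/
noncomputable def blackArcCount {V : Type*} (D : V → V → Prop) : ℕ :=
  Set.ncard {p : V × V | IsBlackArc D p.1 p.2}

/-- The black arc number `b•(G)`: the minimum number of black arcs over all energy
orientations of `G`. -/
noncomputable def blackArcNumber {V : Type*} (G : SimpleGraph V) : ℕ :=
  sInf {k : ℕ | ∃ D : V → V → Prop, IsEnergyOrientation G D ∧ blackArcCount D = k}

lemma stepsTo_tail {V : Type*} {D : V → V → Prop} {k : ℕ} {u v w : V}
    (h : StepsTo D k u v) (hd : D v w) : StepsTo D (k+1) u w := by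
  induction k generalizing u with
  | zero => exact ⟨w, h ▸ hd, rfl⟩
  | succ k ih => obtain ⟨x, hx, hs⟩ := h; exact ⟨x, hx, ih hs⟩

lemma edist_eq {V : Type*} {D : V → V → Prop} {v : V} {m : ℕ}
    (hmem : ∃ s, IsSource D s ∧ StepsTo D m s v)
    (hlb : ∀ k, (∃ s, IsSource D s ∧ StepsTo D k s v) → m ≤ k) :
    edist D v = m :=
  le_antisymm (Nat.sInf_le hmem) (le_csInf ⟨m, hmem⟩ fun _ hk => hlb _ hk)

lemma adj_succ {n : ℕ} (hn : 3 ≤ n) {u v : Fin n} (h : u.val + 1 = v.val) :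
    (SimpleGraph.cycleGraph n).Adj u v := by
  rw [SimpleGraph.cycleGraph_adj']
  right
  rw [Fin.sub_def]
  have hu : u.val < n := u.isLt
  have : n - u.val + v.val = n + 1 := by omega
  simp only [this, Nat.add_mod_left, Nat.mod_eq_of_lt (show (1:ℕ) < n by omega)]

lemma adj_wrap {n : ℕ} (hn : 3 ≤ n) {u v : Fin n} (h1 : u.val = n - 1) (h2 : v.val = 0) :
    (SimpleGraph.cycleGraph n).Adj u v := by
  rw [SimpleGraph.cycleGraph_adj']
  right
  rw [Fin.sub_def]
  have : n - u.val + v.val = 1 := by omega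
  simp only [this, Nat.mod_eq_of_lt (show (1:ℕ) < n by omega)]

lemma adj_cases {n : ℕ} (hn : 3 ≤ n) {u v : Fin n} (h : (SimpleGraph.cycleGraph n).Adj u v) :
    (u.val + 1 = v.val ∨ v.val + 1 = u.val) ∨
      ((u.val = n - 1 ∧ v.val = 0) ∨ (v.val = n - 1 ∧ u.val = 0)) := by
  rw [SimpleGraph.cycleGraph_adj'] at h
  have hu : u.val < n := u.isLt
  have hv : v.val < n := v.isLt
  rcases h with h | h <;> simp only [Fin.sub_def] at h
  · rcases Nat.lt_or_ge (n - v.val + u.val) n with hlt | hge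
    · rw [Nat.mod_eq_of_lt hlt] at h; omega
    · have : n - v.val + u.val - n < n := by omega
      rw [Nat.mod_eq_sub_mod hge, Nat.mod_eq_of_lt this] at h; omega
  · rcases Nat.lt_or_ge (n - u.val + v.val) n with hlt | hge
    · rw [Nat.mod_eq_of_lt hlt] at h; omega
    · have : n - u.val + v.val - n < n := by omega
      rw [Nat.mod_eq_sub_mod hge, Nat.mod_eq_of_lt this] at h; omega

/-! ### Odd orientation -/

def Dodd (n : ℕ) (u v : Fin n) : Prop :=
  u.val + 1 = v.val ∨ (u.val = 0 ∧ v.val = n - 1)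

lemma Dodd_energy {n : ℕ} (hn : 3 ≤ n) :
    IsEnergyOrientation (SimpleGraph.cycleGraph n) (Dodd n) := by
  have hval : ∀ u v : Fin n, Dodd n u v → u.val < v.val := by
    rintro u v (h | ⟨h1, h2⟩) <;> omega
  refine ⟨⟨?_, ?_, ?_⟩, ?_⟩
  · rintro u v (h | ⟨h1, h2⟩)
    · exact adj_succ hn h
    · exact (adj_wrap hn h2 h1).symm
  · intro u v h
    rcases adj_cases hn h with (h | h) | (⟨h1, h2⟩ | ⟨h1, h2⟩)
    · exact Or.inl (Or.inl h)
    · exact Or.inr (Or.inl h)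
    · exact Or.inr (Or.inr ⟨h2, h1⟩)
    · exact Or.inl (Or.inr ⟨h2, h1⟩)
  · intro u v h1 h2
    exact absurd (hval _ _ h2) (Nat.lt_asymm (hval _ _ h1))
  · intro v hv
    have : ∀ a b : Fin n, Relation.TransGen (Dodd n) a b → a.val < b.val := by
      intro a b h
      induction h with
      | single h => exact hval _ _ h
      | tail _ h ih => exact ih.trans (hval _ _ h)
    exact absurd (this _ _ hv) (lt_irrefl _)

lemma Dodd_isSource_iff {n : ℕ} (hn : 3 ≤ n) (s : Fin n) :
    IsSource (Dodd n) s ↔ s.val = 0 := by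
  constructor
  · intro hs
    by_contra h
    exact hs ⟨s.val - 1, by omega⟩
      (Or.inl (show s.val - 1 + 1 = s.val by omega))
  · rintro h u (h' | ⟨h1, h2⟩) <;> omega

lemma Dodd_chain {n : ℕ} (hn : 3 ≤ n) :
    ∀ m (h : m < n), StepsTo (Dodd n) m ⟨0, by omega⟩ ⟨m, h⟩ := by
  intro m
  induction m with
  | zero => intro h; rfl
  | succ m ih =>
    intro h
    exact stepsTo_tail (ih (by omega)) (Or.inl rfl)

lemma Dodd_lb {n : ℕ} (hn : 3 ≤ n) {k : ℕ} {u v : Fin n} (h : StepsTo (Dodd n) k u v) :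
    (if v.val = n - 1 then 1 else v.val) ≤ (if u.val = n - 1 then 1 else u.val) + k := by
  induction k generalizing u with
  | zero => rw [show u = v from h]; exact Nat.le_add_right _ _
  | succ k ih =>
    obtain ⟨w, hw, hs⟩ := h
    have h2 := ih hs
    have hwl : w.val < n := w.isLt
    have hul : u.val < n := u.isLt
    rcases hw with hw | ⟨h1', h2'⟩ <;> split_ifs at h2 ⊢ <;> omega

lemma Dodd_edist {n : ℕ} (hn : 3 ≤ n) (v : Fin n) :
    edist (Dodd n) v = if v.val = n - 1 then 1 else v.val := by
  refine edist_eq ?_ ?_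
  · refine ⟨⟨0, by omega⟩, (Dodd_isSource_iff hn _).mpr rfl, ?_⟩
    split_ifs with h
    · exact ⟨v, Or.inr ⟨rfl, h⟩, rfl⟩
    · exact Dodd_chain hn v.val v.isLt
  · rintro k ⟨s, hs, hst⟩
    have hs0 : s.val = 0 := (Dodd_isSource_iff hn s).mp hs
    have h0 := Dodd_lb hn hst
    split_ifs at h0 ⊢ with h1 h2 <;> omega

lemma Dodd_black {n : ℕ} (hn : 3 ≤ n) :
    {p : Fin n × Fin n | IsBlackArc (Dodd n) p.1 p.2} =
      {((⟨n - 2, by omega⟩ : Fin n), (⟨n - 1, by omega⟩ : Fin n))} := by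
  ext ⟨u, v⟩
  simp only [Set.mem_setOf_eq, Set.mem_singleton_iff, IsBlackArc, Prod.mk.injEq]
  constructor
  · rintro ⟨hd, hb⟩
    rw [Dodd_edist hn, Dodd_edist hn] at hb
    have hul : u.val < n := u.isLt
    have hvl : v.val < n := v.isLt
    rcases hd with hd | ⟨h1, h2⟩
    · split_ifs at hb with h1 h2
      · exfalso; omega
      · exact ⟨Fin.ext (show u.val = n - 2 by omega),
          Fin.ext (show v.val = n - 1 by omega)⟩
      · exfalso; omega
      · exfalso; omega
    · exfalso
      split_ifs at hb <;> omega
  · rintro ⟨hu, hv⟩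
    subst hu; subst hv
    refine ⟨Or.inl (show n - 2 + 1 = n - 1 by omega), ?_⟩
    rw [Dodd_edist hn, Dodd_edist hn]
    show (if n - 1 = n - 1 then 1 else n - 1) ≠ (if n - 2 = n - 1 then 1 else n - 2) + 1
    rw [if_pos rfl, if_neg (by omega)]
    omega

lemma Dodd_count {n : ℕ} (hn : 3 ≤ n) : blackArcCount (Dodd n) = 1 := by
  rw [blackArcCount, Dodd_black hn, Set.ncard_singleton]

/-! ### Even orientation -/

lemma parity_iff {n : ℕ} (hn : 3 ≤ n) (hne : Even n) {u v : Fin n}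
    (h : (SimpleGraph.cycleGraph n).Adj u v) : Even u.val ↔ ¬ Even v.val := by
  have hu : u.val < n := u.isLt
  have hv : v.val < n := v.isLt
  rw [Nat.even_iff] at hne ⊢
  rw [Nat.even_iff]
  rcases adj_cases hn h with (h' | h') | (⟨h1, h2⟩ | ⟨h1, h2⟩) <;> omega

def Dev (n : ℕ) (u v : Fin n) : Prop :=
  (SimpleGraph.cycleGraph n).Adj u v ∧ Even u.val

lemma Dev_energy {n : ℕ} (hn : 3 ≤ n) (hne : Even n) :
    IsEnergyOrientation (SimpleGraph.cycleGraph n) (Dev n) := by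
  refine ⟨⟨fun u v h => h.1, ?_, ?_⟩, ?_⟩
  · intro u v h
    rcases Nat.even_or_odd u.val with he | ho
    · exact Or.inl ⟨h, he⟩
    · refine Or.inr ⟨h.symm, ?_⟩
      exact (parity_iff hn hne h.symm).mpr (Nat.not_even_iff_odd.mpr ho)
  · rintro u v ⟨h1, h2⟩ ⟨h3, h4⟩
    exact (parity_iff hn hne h1).mp h2 h4
  · intro v hv
    have key : ∀ a b : Fin n, Relation.TransGen (Dev n) a b → Dev n a b := by
      intro a b h
      induction h with
      | single h => exact h
      | tail h1 h2 ih => exact absurd h2.2 ((parity_iff hn hne ih.1).mp ih.2)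
    exact (key v v hv).1.ne rfl

lemma Dev_source_iff {n : ℕ} (hn : 3 ≤ n) (hne : Even n) (v : Fin n) :
    IsSource (Dev n) v ↔ Even v.val := by
  constructor
  · intro hs
    by_contra ho
    have h1 : 1 ≤ v.val := by
      rcases Nat.eq_zero_or_pos v.val with h | h
      · exact absurd (h ▸ Even.zero) ho
      · exact h
    refine hs ⟨v.val - 1, by omega⟩
      ⟨adj_succ hn (show v.val - 1 + 1 = v.val by omega), ?_⟩
    show Even (v.val - 1)
    rw [Nat.even_iff] at ho ⊢
    omega
  · intro he u hu
    exact (parity_iff hn hne hu.1).mp hu.2 he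

lemma Dev_edist_even {n : ℕ} (hn : 3 ≤ n) (hne : Even n) {v : Fin n} (hv : Even v.val) :
    edist (Dev n) v = 0 :=
  Nat.sInf_eq_zero.mpr (Or.inl ⟨v, (Dev_source_iff hn hne v).mpr hv, rfl⟩)

lemma Dev_edist_odd {n : ℕ} (hn : 3 ≤ n) (hne : Even n) {v : Fin n} (hv : ¬ Even v.val) :
    edist (Dev n) v = 1 := by
  have h1 : 1 ≤ v.val := by
    rcases Nat.eq_zero_or_pos v.val with h | h
    · exact absurd (h ▸ Even.zero) hv
    · exact h
  have hadj : (SimpleGraph.cycleGraph n).Adj ⟨v.val - 1, by omega⟩ v :=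
    adj_succ hn (show v.val - 1 + 1 = v.val by omega)
  have hue : Even ((⟨v.val - 1, by omega⟩ : Fin n)).val := by
    show Even (v.val - 1)
    rw [Nat.even_iff] at hv ⊢
    omega
  refine edist_eq ⟨_, (Dev_source_iff hn hne _).mpr hue, v, ⟨hadj, hue⟩, rfl⟩ ?_
  rintro k ⟨s, hs, hst⟩
  rcases k with _ | k
  · exact absurd ((hst : s = v) ▸ (Dev_source_iff hn hne s).mp hs) hv
  · omega

lemma Dev_count {n : ℕ} (hn : 3 ≤ n) (hne : Even n) : blackArcCount (Dev n) = 0 := by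
  rw [blackArcCount, Set.ncard_eq_zero (Set.toFinite _)]
  rw [Set.eq_empty_iff_forall_notMem]
  rintro ⟨u, v⟩ ⟨⟨hadj, hue⟩, hb⟩
  have hvo : ¬ Even v.val := (parity_iff hn hne hadj).mp hue
  rw [Dev_edist_odd hn hne hvo, Dev_edist_even hn hne hue] at hb
  exact hb rfl

/-! ### Lower bound for odd n -/

open Fin.NatCast in
lemma odd_lower {n : ℕ} (hn : 3 ≤ n) (ho : Odd n) (D : Fin n → Fin n → Prop)
    (hD : IsEnergyOrientation (SimpleGraph.cycleGraph n) D)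
    (h0 : ∀ u v, D u v → edist D v = edist D u + 1) : False := by
  haveI : NeZero n := ⟨by omega⟩
  have flip : ∀ a b : ZMod 2, a = b + 1 → b = a + 1 := by decide
  have step : ∀ i : Fin n,
      ((edist D (i + 1) : ZMod 2)) = (edist D i : ZMod 2) + 1 := by
    intro i
    have hadj : (SimpleGraph.cycleGraph n).Adj i (i + 1) := by
      rw [SimpleGraph.cycleGraph_adj']
      right
      rw [add_sub_cancel_left, Fin.val_one', Nat.mod_eq_of_lt (by omega)]
    rcases hD.1.2.1 i (i + 1) hadj with h | h
    · rw [h0 _ _ h]; push_cast; ring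
    · refine flip _ _ ?_
      rw [h0 _ _ h]; push_cast; ring
  have main : ∀ m : ℕ, ((edist D ((m : Fin n)) : ZMod 2)) = (edist D 0 : ZMod 2) + m := by
    intro m
    induction m with
    | zero => simp
    | succ m ih =>
      have hc : ((m + 1 : ℕ) : Fin n) = (m : Fin n) + 1 := by push_cast; ring
      rw [hc, step, ih]
      push_cast
      ring
  have hend := main n
  rw [Fin.natCast_self] at hend
  have h2 : ((n : ℕ) : ZMod 2) = 0 := by
    exact left_eq_add.mp hend
  have hdvd : (2 : ℕ) ∣ n := (ZMod.natCast_eq_zero_iff n 2).mp h2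
  rw [Nat.odd_iff] at ho
  omega

lemma odd_lb {n : ℕ} (hn : 3 ≤ n) (ho : Odd n) (D : Fin n → Fin n → Prop)
    (hD : IsEnergyOrientation (SimpleGraph.cycleGraph n) D) :
    1 ≤ blackArcCount D := by
  rw [Nat.one_le_iff_ne_zero]
  intro h
  rw [blackArcCount, Set.ncard_eq_zero (Set.toFinite _),
    Set.eq_empty_iff_forall_notMem] at h
  refine odd_lower hn ho D hD ?_
  intro u v hd
  by_contra hne
  exact h (u, v) ⟨hd, hne⟩

/-- For every `n ≥ 3`, the cycle graph `C_n` satisfies `b•(C_n) = 0` if `n` is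
even and `b•(C_n) = 1` if `n` is odd.  In particular, when `n` is odd every energy orientation
of `C_n` has at least one black arc, and some energy orientation of `C_n` has exactly one
black arc. -/

theorem cycle_blackArcNumber (n : ℕ) (hn : 3 ≤ n) :
    blackArcNumber (SimpleGraph.cycleGraph n) = (if Even n then 0 else 1) ∧
    (Odd n →
      (∀ D : Fin n → Fin n → Prop,
        IsEnergyOrientation (SimpleGraph.cycleGraph n) D → 1 ≤ blackArcCount D) ∧
      (∃ D : Fin n → Fin n → Prop,
        IsEnergyOrientation (SimpleGraph.cycleGraph n) D ∧ blackArcCount D = 1)) := by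
  constructor
  · rcases Nat.even_or_odd n with he | ho
    · rw [if_pos he]
      exact Nat.sInf_eq_zero.mpr (Or.inl ⟨Dev n, Dev_energy hn he, Dev_count hn he⟩)
    · rw [if_neg (Nat.not_even_iff_odd.mpr ho)]
      have h1 : 1 ∈ {k : ℕ | ∃ D : Fin n → Fin n → Prop,
          IsEnergyOrientation (SimpleGraph.cycleGraph n) D ∧ blackArcCount D = k} :=
        ⟨Dodd n, Dodd_energy hn, Dodd_count hn⟩
      have hmem := Nat.sInf_mem ⟨1, h1⟩
      obtain ⟨D, hD, hc⟩ := hmem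
      have hle := Nat.sInf_le h1
      have hlb := odd_lb hn ho D hD
      rw [blackArcNumber]
      omega
  · intro ho
    exact ⟨fun D hD => odd_lb hn ho D hD, ⟨Dodd n, Dodd_energy hn, Dodd_count hn⟩⟩
end

section
/- Every simple connected graph G of order n ≥ 2 that contains no cycle of odd length (equivalently, that is bipartite) satisfies b•(G) = 0; that is, G admits an energy orientation with no black arcs. -/
open SimpleGraph

private lemma path_edge_ends {V : Type*} {G : SimpleGraph V} {b u : V} (q : G.Walk b u)
    (hq : q.IsPath) (hne : b ≠ u) (he : s(b, u) ∈ q.edges) : q.length = 1 := by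
  cases q with
  | nil => simp at he
  | @cons _ c _ h' q₂ =>
    rw [Walk.edges_cons, List.mem_cons] at he
    rcases he with he | he
    · rw [Sym2.eq_iff] at he
      rcases he with ⟨-, hu⟩ | ⟨-, hu⟩
      · subst hu
        rw [Walk.cons_isPath_iff] at hq
        rw [Walk.isPath_iff_eq_nil] at hq
        rw [hq.1]
        simp
      · exact absurd hu.symm hne
    · rw [Walk.cons_isPath_iff] at hq
      exact absurd (q₂.fst_mem_support_of_mem_edges he) hq.2

private lemma odd_closed_walk_cycle {V : Type*} {G : SimpleGraph V} :
    ∀ n : ℕ, ∀ u : V, ∀ p : G.Walk u u, p.length = n → Odd n →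
      ∃ (v : V) (c : G.Walk v v), c.IsCycle ∧ Odd c.length := by
  classical
  intro n
  induction n using Nat.strong_induction_on with
  | _ n ih =>
    intro u p hl hodd
    cases p with
    | nil => rw [Walk.length_nil] at hl; rw [Nat.odd_iff] at hodd; omega
    | @cons _ b _ h q =>
      by_cases hq : q.IsPath
      · by_cases he : s(u, b) ∈ q.edges
        · have h1 : q.length = 1 := by
            apply path_edge_ends q hq h.ne' 
            rwa [Sym2.eq_swap]
          rw [Walk.length_cons, h1] at hl
          rw [Nat.odd_iff] at hodd
          omega
        · exact ⟨u, Walk.cons h q, (Walk.cons_isCycle_iff q h).mpr ⟨hq, he⟩, hl ▸ hodd⟩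
      · have hnd : ¬ q.support.Nodup := by rwa [Walk.isPath_def] at hq
        obtain ⟨w, hwdup⟩ := List.exists_duplicate_iff_not_nodup.mpr hnd
        have hw2 : 2 ≤ q.support.count w := List.duplicate_iff_two_le_count.mp hwdup
        have hw : w ∈ q.support := List.count_pos_iff.mp (by omega)
        have hsplit := q.take_spec hw
        have hc1 : (q.takeUntil w hw).support.count w = 1 :=
          q.count_support_takeUntil_eq_one hw
        have hwtail : w ∈ (q.dropUntil w hw).support.tail := by
          rw [← hsplit, Walk.support_append, List.count_append, hc1] at hw2
          exact List.count_pos_iff.mp (by omega)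
        rcases hq2 : q.dropUntil w hw with _ | @⟨_, c₂, _, h₂, q3⟩
        · rw [hq2] at hwtail; simp at hwtail
        · rw [hq2] at hwtail
          rw [Walk.support_cons, List.tail_cons] at hwtail
          have hlen : q.length = (q.takeUntil w hw).length + (q3.length + 1) := by
            conv_lhs => rw [← hsplit]
            rw [Walk.length_append, hq2, Walk.length_cons]
          set m1 := q3.takeUntil w hwtail with hm1
          set m2 := q3.dropUntil w hwtail with hm2
          have hlen3 : q3.length = m1.length + m2.length := by
            conv_lhs => rw [← q3.take_spec hwtail]
            rw [Walk.length_append]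
          set B : G.Walk w w := Walk.cons h₂ m1 with hB
          set C : G.Walk u u := (Walk.cons h (q.takeUntil w hw)).append m2 with hC
          have hBlen : B.length = m1.length + 1 := Walk.length_cons _ _
          have hClen : C.length = (q.takeUntil w hw).length + 1 + m2.length := by
            rw [hC, Walk.length_append, Walk.length_cons]
          have hn : B.length + C.length = n := by
            rw [← hl, hBlen, hClen, Walk.length_cons, hlen, hlen3]; omega
          rcases Nat.even_or_odd B.length with hB2 | hB2
          · have hC2 : Odd C.length := by
              rcases Nat.even_or_odd C.length with h' | h'
              · exfalso; rw [← hn, Nat.odd_iff] at hodd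
                rw [Nat.even_iff] at hB2 h'
                omega
              · exact h'
            exact ih C.length (by omega) u C rfl hC2
          · exact ih B.length (by omega) w B rfl hB2

/-- Every simple connected graph `G` of order `n ≥ 2` containing no cycle of
odd length (equivalently, bipartite) satisfies `b•(G) = 0`; that is, `G` admits an energy
orientation with no black arcs. -/
theorem no_odd_cycle_blackArcNumber {V : Type*} [Fintype V] (G : SimpleGraph V)
    (h2 : 2 ≤ Fintype.card V) (hconn : G.Connected)
    (hodd : ∀ (v : V) (c : G.Walk v v), c.IsCycle → ¬ Odd c.length) :
    blackArcNumber G = 0 ∧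
    ∃ D : V → V → Prop, IsEnergyOrientation G D ∧ blackArcCount D = 0 := by
  classical
  have hne : Nonempty V := Fintype.card_pos_iff.mp (by omega)
  obtain ⟨v0⟩ := hne
  -- the coloring: parity of a chosen walk from v0
  set c : V → Prop := fun v => Odd ((hconn.preconnected v0 v).some.length) with hcdef
  -- validity
  have hvalid : ∀ u v, G.Adj u v → (c u ↔ c v) → False := by
    intro u v hadj hiff
    set p := (hconn.preconnected v0 u).some with hp
    set q := (hconn.preconnected v0 v).some with hq'
    set W : G.Walk u u := p.reverse.append (q.concat hadj.symm) with hW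
    have hWlen : W.length = p.length + (q.length + 1) := by
      rw [hW, SimpleGraph.Walk.length_append, SimpleGraph.Walk.length_reverse,
        SimpleGraph.Walk.length_concat]
    have hWodd : Odd W.length := by
      rw [hWlen]
      have hpq : Odd p.length ↔ Odd q.length := hiff
      simp only [Nat.odd_iff] at hpq ⊢
      omega
    obtain ⟨x, cyc, hcyc, hcycodd⟩ := odd_closed_walk_cycle W.length u W rfl hWodd
    exact hodd x cyc hcyc hcycodd
  -- every vertex has a neighbor
  have hnb : ∀ v : V, ∃ w, G.Adj v w := by
    intro v
    obtain ⟨w, hw⟩ := Fintype.exists_ne_of_one_lt_card (by omega) v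
    obtain ⟨pw⟩ := hconn.preconnected v w
    cases pw with
    | nil => exact absurd rfl hw.symm
    | cons h _ => exact ⟨_, h⟩
  -- the orientation
  set D : V → V → Prop := fun u v => G.Adj u v ∧ ¬ c u ∧ c v with hD
  have hDadj : ∀ u v, D u v → G.Adj u v := fun u v h => h.1
  -- sources
  have hsrc' : ∀ v, ¬ c v → IsSource D v := fun v hv u hu => hv hu.2.2
  -- edist values
  have hed0 : ∀ v, ¬ c v → edist D v = 0 := by
    intro v hv
    apply Nat.sInf_eq_zero.mpr
    exact Or.inl ⟨v, hsrc' v hv, rfl⟩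
  have hed1 : ∀ v, c v → edist D v = 1 := by
    intro v hv
    obtain ⟨w, hw⟩ := hnb v
    have hcw : ¬ c w := fun hcw => hvalid v w hw (iff_of_true hv hcw)
    have hDwv : D w v := ⟨hw.symm, hcw, hv⟩
    have h1mem : 1 ∈ {k : ℕ | ∃ s, IsSource D s ∧ StepsTo D k s v} :=
      ⟨w, hsrc' w hcw, ⟨v, hDwv, rfl⟩⟩
    have h0nmem : 0 ∉ {k : ℕ | ∃ s, IsSource D s ∧ StepsTo D k s v} := by
      rintro ⟨s, hs, hst⟩
      have : s = v := hst
      subst this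
      exact hs w hDwv
    have hmem := Nat.sInf_mem (Set.nonempty_of_mem h1mem)
    have hle : sInf {k : ℕ | ∃ s, IsSource D s ∧ StepsTo D k s v} ≤ 1 := Nat.sInf_le h1mem
    have hne0 : sInf {k : ℕ | ∃ s, IsSource D s ∧ StepsTo D k s v} ≠ 0 := by
      intro h0; rw [h0] at hmem; exact h0nmem hmem
    show sInf {k : ℕ | ∃ s, IsSource D s ∧ StepsTo D k s v} = 1
    omega
  -- energy orientation
  have hEO : IsEnergyOrientation G D := by
    refine ⟨⟨hDadj, ?_, ?_⟩, ?_⟩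
    · intro u v hadj
      by_cases hcu : c u
      · have hcv : ¬ c v := fun hcv => hvalid u v hadj (iff_of_true hcu hcv)
        exact Or.inr ⟨hadj.symm, hcv, hcu⟩
      · have hcv : c v := by
          by_contra hcv
          exact hvalid u v hadj (iff_of_false hcu hcv)
        exact Or.inl ⟨hadj, hcu, hcv⟩
    · intro u v huv hvu
      exact hvu.2.1 huv.2.2
    · intro v hv
      have key : ∀ a b, Relation.TransGen D a b → ¬ c a ∧ c b := by
        intro a b h
        induction h with
        | single h => exact ⟨h.2.1, h.2.2⟩
        | tail _ h2 ih => exact absurd ih.2 h2.2.1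
      exact (key v v hv).1 (key v v hv).2
  -- no black arcs
  have hcount : blackArcCount D = 0 := by
    have : {p : V × V | IsBlackArc D p.1 p.2} = ∅ := by
      ext ⟨u, v⟩
      simp only [Set.mem_setOf_eq, Set.mem_empty_iff_false, iff_false]
      rintro ⟨hDuv, hne'⟩
      exact hne' (by rw [hed1 v hDuv.2.2, hed0 u hDuv.2.1])
    rw [blackArcCount, this, Set.ncard_empty]
  refine ⟨?_, D, hEO, hcount⟩
  exact Nat.sInf_eq_zero.mpr (Or.inl ⟨D, hEO, hcount⟩)
end

section
/- A simple connected graph G of order n ≥ 2 satisfies b•(G) = 0 (i.e., G admits an energy orientation with no black arcs) if and only if G contains no cycle of odd length. -/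
open SimpleGraph

/-- If a path `q : y → v` contains the edge `s(v, y)`, then it has length 1. -/
lemma path_edge_back {V : Type*} {G : SimpleGraph V} {y v : V} (q : G.Walk y v)
    (hq : q.IsPath) (hvy : v ≠ y) (he : s(v, y) ∈ q.edges) : q.length = 1 := by
  cases q with
  | nil => simp at he
  | @cons _ z _ h' q'' =>
    rw [Walk.edges_cons, List.mem_cons] at he
    rcases he with he | he
    · rw [Sym2.eq_iff] at he
      rcases he with ⟨hv, _⟩ | ⟨hv, _⟩
      · exact absurd hv hvy
      · subst hv
        have hq'' : q''.IsPath := hq.of_cons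
        have : q'' = Walk.nil := Walk.isPath_iff_eq_nil.mp hq''
        subst this
        simp
    · have hy : y ∈ q''.support := Walk.snd_mem_support_of_mem_edges q'' he
      rw [Walk.cons_isPath_iff] at hq
      exact absurd hy hq.2

/-- A closed walk of odd length contains an odd cycle. -/
lemma exists_odd_cycle_of_odd_closed_walk {V : Type*} {G : SimpleGraph V} :
    ∀ n : ℕ, ∀ (v : V) (p : G.Walk v v), p.length = n → Odd n →
    ∃ (w : V) (c : G.Walk w w), c.IsCycle ∧ Odd c.length := by
  intro n
  induction n using Nat.strong_induction_on with
  | _ n ih =>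
  intro v p hl hodd
  classical
  cases p with
  | nil =>
    simp only [Walk.length_nil] at hl
    subst hl
    exact absurd hodd (by simp)
  | @cons _ y _ h q =>
    rw [Walk.length_cons] at hl
    by_cases hq : q.IsPath
    · by_cases he : s(v, y) ∈ q.edges
      · have h1 := path_edge_back q hq h.ne he
        rw [h1] at hl
        subst hl
        exact absurd hodd (by simp [Nat.odd_iff])
      · refine ⟨v, Walk.cons h q, (Walk.cons_isCycle_iff q h).mpr ⟨hq, he⟩, ?_⟩
        rwa [Walk.length_cons, hl]
    · rw [Walk.isPath_def] at hq
      obtain ⟨x, hdup⟩ := List.exists_duplicate_iff_not_nodup.mpr hq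
      have hcount : 2 ≤ q.support.count x := List.duplicate_iff_two_le_count.mp hdup
      have hx : x ∈ q.support := hdup.mem
      have hspec := q.take_spec hx
      have hone := q.count_support_takeUntil_eq_one hx
      set t := q.takeUntil x hx with ht
      set d := q.dropUntil x hx with hd
      have hlen : t.length + d.length = q.length := by
        rw [← hspec, Walk.length_append]
      have hcount2 : 1 ≤ d.support.tail.count x := by
        have : (t.append d).support.count x = q.support.count x := by rw [hspec]
        rw [Walk.support_append, List.count_append] at this
        omega
      have hxd : x ∈ d.support.tail := by
        rw [← List.count_pos_iff]
        omega
      clear_value t d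
      clear hspec hq hdup hcount hone
      cases d with
      | nil => simp at hxd
      | @cons _ z _ h2 d' =>
        rw [Walk.support_cons, List.tail_cons] at hxd
        have hspec2 := d'.take_spec hxd
        set e := d'.takeUntil x hxd with he'
        set R := d'.dropUntil x hxd with hR
        have hlen2 : e.length + R.length = d'.length := by
          rw [← hspec2, Walk.length_append]
        rw [Walk.length_cons] at hlen
        -- closed walks: C := cons h2 e : Walk x x, P := cons h (t.append R) : Walk v v
        have hCl : (Walk.cons h2 e).length = e.length + 1 := Walk.length_cons _ _
        have hPl : (Walk.cons h (t.append R)).length = t.length + R.length + 1 := by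
          rw [Walk.length_cons, Walk.length_append]
        have hoddn := Nat.odd_iff.mp hodd
        rcases Nat.even_or_odd (e.length + 1) with hC | hC
        · -- recurse on P
          have hPodd : Odd (t.length + R.length + 1) := by
            rw [Nat.even_iff] at hC
            rw [Nat.odd_iff]
            omega
          refine ih (t.length + R.length + 1) (by omega) v (Walk.cons h (t.append R)) hPl hPodd
        · -- recurse on C
          refine ih (e.length + 1) (by omega) x (Walk.cons h2 e) hCl hC

/-- With no black arcs, te edist parity is constant along walks. -/
lemma walk_parity {V : Type*} {G : SimpleGraph V} {D : V → V → Prop}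
    (hor : IsOrientation G D)
    (hb : ∀ u v, D u v → edist D v = edist D u + 1) :
    ∀ {a b : V} (p : G.Walk a b), (edist D a + edist D b + p.length) % 2 = 0 := by
  intro a b p
  induction p with
  | nil => simp [Nat.add_mod_right]; omega
  | @cons a c b h q ihq =>
    rw [Walk.length_cons]
    rcases hor.2.1 _ _ h with hd | hd
    · have := hb _ _ hd
      omega
    · have := hb _ _ hd
      omega

lemma adj_dist_parity {V : Type*} {G : SimpleGraph V} (hconn : G.Connected)
    (hno : ∀ (v : V) (c : G.Walk v v), c.IsCycle → ¬ Odd c.length) (r : V) {u v : V}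
    (h : G.Adj u v) : G.dist r u % 2 ≠ G.dist r v % 2 := by
  intro heq
  obtain ⟨p, hp⟩ := hconn.exists_walk_length_eq_dist r u
  obtain ⟨q, hq⟩ := hconn.exists_walk_length_eq_dist r v
  have hodd : Odd (p.append (Walk.cons h q.reverse)).length := by
    rw [Walk.length_append, Walk.length_cons, Walk.length_reverse, hp, hq, Nat.odd_iff]
    omega
  obtain ⟨w, c, hc, hcodd⟩ :=
    exists_odd_cycle_of_odd_closed_walk _ r (p.append (Walk.cons h q.reverse)) rfl hodd
  exact hno w c hc hcodd

lemma exists_adj_of_dist_ne_zero' {V : Type*} {G : SimpleGraph V} {r w : V}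
    (hne : G.dist r w ≠ 0) : ∃ u, G.Adj w u := by
  obtain ⟨p, hp⟩ := SimpleGraph.exists_walk_of_dist_ne_zero hne
  have hnil : ¬ p.reverse.Nil := by
    rw [Walk.nil_iff_length_eq, Walk.length_reverse]
    omega
  obtain ⟨u, h, q, _⟩ := Walk.not_nil_iff.mp hnil
  exact ⟨u, h⟩

/-- A simple connected graph `G` of order `n ≥ 2` satisfies `b•(G) = 0`
(equivalently, admits an energy orientation with no black arcs) if and only if `G` contains no
cycle of odd length. -/
theorem blackArcNumber_eq_zero_iff_no_odd_cycle {V : Type*} [Fintype V] (G : SimpleGraph V)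
    (h2 : 2 ≤ Fintype.card V) (hconn : G.Connected) :
    (blackArcNumber G = 0 ↔ ∀ (v : V) (c : G.Walk v v), c.IsCycle → ¬ Odd c.length) ∧
    ((∃ D : V → V → Prop, IsEnergyOrientation G D ∧ blackArcCount D = 0) ↔
      ∀ (v : V) (c : G.Walk v v), c.IsCycle → ¬ Odd c.length) := by
  classical
  have hVne : Nonempty V := Fintype.card_pos_iff.mp (by omega)
  obtain ⟨r⟩ := hVne
  -- there is always an energy orientation
  have hexistsEO : ∃ D : V → V → Prop, IsEnergyOrientation G D := by
    set e := Fintype.equivFin V with he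
    refine ⟨fun u v => G.Adj u v ∧ e u < e v,
      ⟨fun u v h => h.1, fun u v h => ?_, fun u v h hvu => absurd hvu.2 (asymm h.2)⟩, ?_⟩
    · rcases lt_or_gt_of_ne (fun hEq => h.ne (e.injective hEq)) with hlt | hgt
      · exact Or.inl ⟨h, hlt⟩
      · exact Or.inr ⟨h.symm, hgt⟩
    · intro v hv
      have key : ∀ a b : V, Relation.TransGen (fun u v => G.Adj u v ∧ e u < e v) a b →
          e a < e b := by
        intro a b hab
        induction hab with
        | single h => exact h.2
        | tail _ h ih => exact ih.trans h.2
      exact lt_irrefl _ (key v v hv)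
  -- the main equivalence
  have hmain : (∃ D : V → V → Prop, IsEnergyOrientation G D ∧ blackArcCount D = 0) ↔
      ∀ (v : V) (c : G.Walk v v), c.IsCycle → ¬ Odd c.length := by
    constructor
    · rintro ⟨D, hD, hcount⟩ v c hc hodd
      have hempty : {p : V × V | IsBlackArc D p.1 p.2} = ∅ :=
        (Set.ncard_eq_zero (Set.toFinite _)).mp hcount
      have hb : ∀ u w, D u w → edist D w = edist D u + 1 := by
        intro u w hd
        by_contra hne
        have hmem : (u, w) ∈ {p : V × V | IsBlackArc D p.1 p.2} := ⟨hd, hne⟩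
        rw [hempty] at hmem
        exact hmem
      have hpar := walk_parity hD.1 hb c
      rw [Nat.odd_iff] at hodd
      omega
    · intro hno
      have hpar : ∀ u v : V, G.Adj u v → G.dist r u % 2 ≠ G.dist r v % 2 :=
        fun u v h => adj_dist_parity hconn hno r h
      set D : V → V → Prop :=
        fun u v => G.Adj u v ∧ G.dist r u % 2 = 0 ∧ G.dist r v % 2 = 1 with hDdef
      have hor : IsOrientation G D := by
        refine ⟨fun u v h => h.1, fun u v h => ?_, fun u v h h' => ?_⟩
        · have hne := hpar u v h
          by_cases hu : G.dist r u % 2 = 0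
          · exact Or.inl ⟨h, hu, by omega⟩
          · exact Or.inr ⟨h.symm, by omega, by omega⟩
        · have := h.2.2
          have := h'.2.1
          omega
      have hkey : ∀ a b : V, Relation.TransGen D a b → D a b := by
        intro a b hab
        induction hab with
        | single h => exact h
        | tail _ h ih => exact absurd h.2.1 (by have := ih.2.2; omega)
      have hacyc : ∀ v : V, ¬ Relation.TransGen D v v := by
        intro v hv
        have h1 := (hkey v v hv).2.1
        have h2 := (hkey v v hv).2.2
        omega
      have hsrc : ∀ w : V, G.dist r w % 2 = 0 → IsSource D w := by
        intro w hw u hu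
        have := hu.2.2
        omega
      have hedist0 : ∀ w : V, G.dist r w % 2 = 0 → edist D w = 0 := by
        intro w hw
        exact Nat.sInf_eq_zero.mpr (Or.inl ⟨w, hsrc w hw, rfl⟩)
      have hedist1 : ∀ w : V, G.dist r w % 2 = 1 → edist D w = 1 := by
        intro w hw
        have hdne : G.dist r w ≠ 0 := by omega
        obtain ⟨u, hadj⟩ := exists_adj_of_dist_ne_zero' hdne
        have hu0 : G.dist r u % 2 = 0 := by have := hpar w u hadj; omega
        have hDuw : D u w := ⟨hadj.symm, hu0, hw⟩
        have h1 : (1 : ℕ) ∈ {k : ℕ | ∃ s, IsSource D s ∧ StepsTo D k s w} :=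
          ⟨u, hsrc u hu0, ⟨w, hDuw, rfl⟩⟩
        have hle := Nat.sInf_le h1
        have hnz : sInf {k : ℕ | ∃ s, IsSource D s ∧ StepsTo D k s w} ≠ 0 := by
          intro h0
          rcases Nat.sInf_eq_zero.mp h0 with h0' | h0'
          · obtain ⟨s, hs, hstep⟩ := h0'
            have hsw : s = w := hstep
            subst hsw
            exact hs u hDuw
          · rw [Set.eq_empty_iff_forall_notMem] at h0'
            exact h0' 1 h1
        unfold _root_.edist
        omega
      have hempty : {p : V × V | IsBlackArc D p.1 p.2} = ∅ := by
        rw [Set.eq_empty_iff_forall_notMem]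
        rintro ⟨u, w⟩ ⟨hd, hne⟩
        exact hne (by rw [hedist1 w hd.2.2, hedist0 u hd.2.1])
      refine ⟨D, ⟨hor, hacyc⟩, ?_⟩
      unfold blackArcCount
      rw [hempty, Set.ncard_empty]
  refine ⟨⟨?_, ?_⟩, hmain⟩
  · intro h0
    apply hmain.mp
    unfold blackArcNumber at h0
    rcases Nat.sInf_eq_zero.mp h0 with hmem | hemp
    · exact hmem
    · exfalso
      obtain ⟨D0, hD0⟩ := hexistsEO
      rw [Set.eq_empty_iff_forall_notMem] at hemp
      exact hemp (blackArcCount D0) ⟨D0, hD0, rfl⟩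
  · intro hno
    obtain ⟨D, hD, hc⟩ := hmain.mpr hno
    unfold blackArcNumber
    exact Nat.sInf_eq_zero.mpr (Or.inl ⟨D, hD, hc⟩)
end

section
/- Let k ≥ 3, m ≥ 1 and n ≥ mk, and let a_i = i mod k. In the finite Jaco-type graph J_n((a_i)), the in-degree of the mod-sink vertex mk equals ⌊k/2⌋; equivalently, the number of integers i with 1 ≤ i < mk and mk ≤ i + (i mod k) is exactly ⌊k/2⌋. -/
/-- The arc relation of the finite Jaco-type graph `J_n((a_i))`: the vertices are
`1, 2, …, n ∈ ℕ` and `(i, j)` is an arc iff `1 ≤ i < j ≤ n` and `j ≤ i + a_i`. -/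
def JacoArc (a : ℕ → ℕ) (n i j : ℕ) : Prop :=
  1 ≤ i ∧ i < j ∧ j ≤ n ∧ j ≤ i + a i

lemma modk_key (k m : ℕ) (hk : 3 ≤ k) (hm : 1 ≤ m) (i : ℕ) :
    (1 ≤ i ∧ i < m * k ∧ m * k ≤ i + i % k) ↔
      ((m - 1) * k + (k + 1) / 2 ≤ i ∧ i < m * k) := by
  have hmk : m * k = (m - 1) * k + k := by
    have : m - 1 + 1 = m := Nat.succ_pred_eq_of_pos hm
    calc m * k = (m - 1 + 1) * k := by rw [this]
    _ = (m - 1) * k + k := by ring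
  constructor
  · rintro ⟨h1, h2, h3⟩
    set q := i / k with hq
    set r := i % k with hr
    have hi : k * q + r = i := Nat.div_add_mod i k
    have hrk : r < k := Nat.mod_lt _ (by omega)
    have hcomm : q * k = k * q := Nat.mul_comm _ _
    have hqm : q < m := by
      have : q * k < m * k := by
        calc q * k ≤ i := by omega
        _ < m * k := h2
      exact Nat.lt_of_mul_lt_mul_right this
    have hqm2 : m < q + 2 := by
      have : m * k < (q + 2) * k := by
        have h22 : (q + 2) * k = k * q + 2 * k := by ring
        omega
      exact Nat.lt_of_mul_lt_mul_right this
    have hq' : q = m - 1 := by omega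
    have hik : i = (m - 1) * k + r := by
      rw [← hq']; omega
    have h2r : k ≤ 2 * r := by omega
    constructor
    · omega
    · exact h2
  · rintro ⟨h1, h2⟩
    have hr2 : (k + 1) / 2 ≤ i - (m - 1) * k := by omega
    set r := i - (m - 1) * k with hrdef
    have hik : i = (m - 1) * k + r := by omega
    have hrk : r < k := by omega
    have hmod : i % k = r := by
      rw [hik, Nat.add_comm, Nat.add_mul_mod_self_right]
      exact Nat.mod_eq_of_lt hrk
    refine ⟨by omega, h2, ?_⟩
    rw [hmod]; omega

/-- Let `k ≥ 3`, `m ≥ 1` and `n ≥ m·k`, and let `a_i = i mod k`.  In the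
finite Jaco-type graph `J_n((a_i))` the in-degree of the mod-sink vertex `m·k` equals `⌊k/2⌋`;
equivalently, the number of integers `i` with `1 ≤ i < m·k` and `m·k ≤ i + (i mod k)` is
exactly `⌊k/2⌋`. -/
theorem modk_sink_indegree (k m n : ℕ) (hk : 3 ≤ k) (hm : 1 ≤ m) (hn : m * k ≤ n) :
    Set.ncard {i : ℕ | JacoArc (fun i => i % k) n i (m * k)} = k / 2 ∧
    ((Finset.Ico 1 (m * k)).filter (fun i => m * k ≤ i + i % k)).card = k / 2 := by
  have hmk : m * k = (m - 1) * k + k := by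
    have : m - 1 + 1 = m := Nat.succ_pred_eq_of_pos hm
    calc m * k = (m - 1 + 1) * k := by rw [this]
    _ = (m - 1) * k + k := by ring
  have hfilter : (Finset.Ico 1 (m * k)).filter (fun i => m * k ≤ i + i % k)
      = Finset.Ico ((m - 1) * k + (k + 1) / 2) (m * k) := by
    ext i
    simp only [Finset.mem_filter, Finset.mem_Ico]
    constructor
    · rintro ⟨⟨h1, h2⟩, h3⟩
      exact (modk_key k m hk hm i).mp ⟨h1, h2, h3⟩
    · intro h
      obtain ⟨h1, h2, h3⟩ := (modk_key k m hk hm i).mpr h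
      exact ⟨⟨h1, h2⟩, h3⟩
  have hcard : ((Finset.Ico 1 (m * k)).filter (fun i => m * k ≤ i + i % k)).card = k / 2 := by
    rw [hfilter, Nat.card_Ico]
    omega
  refine ⟨?_, hcard⟩
  have hset : {i : ℕ | JacoArc (fun i => i % k) n i (m * k)}
      = ↑((Finset.Ico 1 (m * k)).filter (fun i => m * k ≤ i + i % k)) := by
    ext i
    simp only [Set.mem_setOf_eq, JacoArc, Finset.coe_filter, Finset.mem_Ico]
    constructor
    · rintro ⟨h1, h2, _, h4⟩
      exact ⟨⟨h1, h2⟩, h4⟩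
    · rintro ⟨⟨h1, h2⟩, h3⟩
      exact ⟨h1, h2, hn, h3⟩
  rw [hset, Set.ncard_coe_finset, hcard]
end

section
/- Let k ≥ 1, n ≥ 1 and a_i = i mod k. The vertices of out-degree 0 (sink vertices) of the finite Jaco-type graph J_n((a_i)) are exactly the multiples of k lying in {1, …, n} together with the vertex n, and their number is ⌈n/k⌉. -/
/-- Let `k ≥ 1`, `n ≥ 1` and `a_i = i mod k`.  The vertices of out-degree `0`
(sink vertices) of the finite Jaco-type graph `J_n((a_i))` are exactly the multiples of `k`
lying in `{1, …, n}` together with the vertex `n`, and their number is `⌈n/k⌉`. -/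
theorem modk_sinks (k n : ℕ) (hk : 1 ≤ k) (hn : 1 ≤ n) :
    (∀ v : ℕ, 1 ≤ v → v ≤ n →
      ((∀ j : ℕ, ¬ JacoArc (fun i => i % k) n v j) ↔ (k ∣ v ∨ v = n))) ∧
    Set.ncard {v : ℕ | 1 ≤ v ∧ v ≤ n ∧ ∀ j : ℕ, ¬ JacoArc (fun i => i % k) n v j} =
      (n + k - 1) / k := by
  classical
  have hkpos : 0 < k := hk
  have hchar : ∀ v : ℕ, 1 ≤ v → v ≤ n →
      ((∀ j : ℕ, ¬ JacoArc (fun i => i % k) n v j) ↔ (k ∣ v ∨ v = n)) := by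
    intro v hv1 hvn
    have hmod : v % k < k := Nat.mod_lt _ hkpos
    have hdvd : k ∣ v ↔ v % k = 0 := Nat.dvd_iff_mod_eq_zero
    constructor
    · intro h
      by_contra hc
      push_neg at hc
      have h1 : v % k ≠ 0 := fun h0 => hc.1 (hdvd.mpr h0)
      exact h (v + 1) ⟨hv1, by omega, by omega, by simp; omega⟩
    · rintro (hd | rfl) j ⟨_, hvj, hjn, hjb⟩
      · have : v % k = 0 := hdvd.mp hd
        simp at hjb; omega
      · omega
  refine ⟨hchar, ?_⟩
  have hset : {v : ℕ | 1 ≤ v ∧ v ≤ n ∧ ∀ j : ℕ, ¬ JacoArc (fun i => i % k) n v j} =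
      ↑((Finset.Ioc 0 n).filter (fun v => k ∣ v ∨ v = n)) := by
    ext v
    simp only [Set.mem_setOf_eq, Finset.coe_filter, Finset.mem_Ioc, Set.mem_setOf_eq]
    constructor
    · rintro ⟨h1, h2, h3⟩
      exact ⟨⟨h1, h2⟩, (hchar v h1 h2).mp h3⟩
    · rintro ⟨⟨h1, h2⟩, h3⟩
      exact ⟨h1, h2, (hchar v h1 h2).mpr h3⟩
  rw [hset, Set.ncard_coe_finset]
  by_cases hkn : k ∣ n
  · have : (Finset.Ioc 0 n).filter (fun v => k ∣ v ∨ v = n) =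
        (Finset.Ioc 0 n).filter (fun v => k ∣ v) := by
      apply Finset.filter_congr
      intro v hv
      constructor
      · rintro (h | rfl) <;> [exact h; exact hkn]
      · exact Or.inl
    rw [this, Nat.Ioc_filter_dvd_card_eq_div]
    obtain ⟨q, rfl⟩ := hkn
    have hq : 1 ≤ q := by
      rcases Nat.eq_zero_or_pos q with h | h
      · subst h; simp at hn
      · exact h
    have h1 : k * q + k - 1 = k * q + (k - 1) := by omega
    rw [h1, Nat.mul_add_div hkpos q (k - 1),
      Nat.div_eq_of_lt (show k - 1 < k by omega), Nat.mul_div_cancel_left q hkpos]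
    omega
  · have hsplit : (Finset.Ioc 0 n).filter (fun v => k ∣ v ∨ v = n) =
        (Finset.Ioc 0 n).filter (fun v => k ∣ v) ∪ {n} := by
      ext v
      simp only [Finset.mem_filter, Finset.mem_union, Finset.mem_singleton, Finset.mem_Ioc]
      constructor
      · rintro ⟨hv, h | h⟩
        · exact Or.inl ⟨hv, h⟩
        · exact Or.inr h
      · rintro (⟨hv, h⟩ | rfl)
        · exact ⟨hv, Or.inl h⟩
        · exact ⟨⟨hn, le_rfl⟩, Or.inr rfl⟩
    have hdisj : Disjoint ((Finset.Ioc 0 n).filter (fun v => k ∣ v)) ({n} : Finset ℕ) := by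
      simp only [Finset.disjoint_singleton_right, Finset.mem_filter]
      rintro ⟨_, h⟩
      exact hkn h
    rw [hsplit, Finset.card_union_of_disjoint hdisj, Nat.Ioc_filter_dvd_card_eq_div,
      Finset.card_singleton]
    -- show n / k + 1 = (n + k - 1) / k
    have hq := Nat.div_add_mod n k
    set q := n / k
    set r := n % k
    have hr : r ≠ 0 := fun h0 => hkn ((Nat.dvd_iff_mod_eq_zero).mpr h0)
    have hrk : r < k := Nat.mod_lt _ hkpos
    have hm : k * (q + 1) = k * q + k := by ring
    have h1 : n + k - 1 = k * (q + 1) + (r - 1) := by omega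
    rw [h1, Nat.mul_add_div hkpos (q + 1) (r - 1),
      Nat.div_eq_of_lt (show r - 1 < k by omega)]
end

section
/- Let a_i = i mod 4. For every n ≥ 4, the black arc number of the finite Jaco-type graph J_n((a_i)) equals ⌊n/2⌋ − 1; that is, the Jaco-type Black Arc Algorithm applied to J_n((a_i)) outputs exactly ⌊n/2⌋ − 1 black arcs. -/
/-- The arc set of the finite Jaco-type graph `J_n((a_i))`, as a set of ordered pairs. -/
def jacoArcSet (a : ℕ → ℕ) (n : ℕ) : Set (ℕ × ℕ) :=
  {p : ℕ × ℕ | JacoArc a n p.1 p.2}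

/-- Given an arc set `A`, `blackAt i A` is the set of arcs of `A` both of whose endpoints are
out-neighbours of vertex `i` in `A` (the arcs of the subgraph induced by the
out-neighbourhood of `i`). -/
def blackAt (i : ℕ) (A : Set (ℕ × ℕ)) : Set (ℕ × ℕ) :=
  {p ∈ A | (i, p.1) ∈ A ∧ (i, p.2) ∈ A}

/-- The Jaco-type Black Arc Algorithm: `algG A m` is the arc set `G_{m+1}` obtained from
`G_1 = A` by deleting, for `i = 1, …, m`, the arc set `B_i = blackAt i G_i` at step `i`. -/
def algG (A : Set (ℕ × ℕ)) : ℕ → Set (ℕ × ℕ)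
  | 0 => A
  | m + 1 => algG A m \ blackAt (m + 1) (algG A m)

/-- The set of black arcs output by the Jaco-type Black Arc Algorithm on an arc set `A` with
`n` vertices: `B = B_1 ∪ ⋯ ∪ B_{n−1}` where `B_i = blackAt i G_i` and `G_i = algG A (i−1)`. -/
def blackSet (A : Set (ℕ × ℕ)) (n : ℕ) : Set (ℕ × ℕ) :=
  ⋃ i ∈ Finset.Icc 1 (n - 1), blackAt i (algG A (i - 1))

def Blk (n m : ℕ) : Set (ℕ × ℕ) :=
  {p | p.2 = p.1 + 1 ∧ 3 ≤ p.1 ∧ p.2 ≤ n ∧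
    ((p.1 % 4 = 3 ∧ p.1 ≤ m + 1) ∨ (p.1 % 4 = 1 ∧ p.1 ≤ m + 2))}

lemma algG_eq (n : ℕ) : ∀ m, algG (jacoArcSet (fun i => i % 4) n) m
    = jacoArcSet (fun i => i % 4) n \ Blk n m := by
  intro m
  induction m with
  | zero =>
    ext ⟨x, y⟩
    simp only [algG, jacoArcSet, JacoArc, Blk, Set.mem_setOf_eq, Set.mem_diff]
    omega
  | succ m ih =>
    show algG _ m \ blackAt (m+1) (algG _ m) = _
    rw [ih]
    ext ⟨x, y⟩
    simp only [blackAt, jacoArcSet, JacoArc, Blk, Set.mem_setOf_eq, Set.mem_diff,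
      Set.mem_sep_iff]
    omega

lemma blackSet_eq (n : ℕ) (hn : 4 ≤ n) :
    blackSet (jacoArcSet (fun i => i % 4) n) n
      = {p : ℕ × ℕ | p.2 = p.1 + 1 ∧ 3 ≤ p.1 ∧ p.2 ≤ n ∧ p.1 % 2 = 1} := by
  ext ⟨x, y⟩
  simp only [blackSet, Set.mem_iUnion, Finset.mem_Icc, exists_prop, Set.mem_setOf_eq]
  constructor
  · rintro ⟨i, hi, hmem⟩
    rw [algG_eq] at hmem
    simp only [blackAt, jacoArcSet, JacoArc, Blk, Set.mem_setOf_eq, Set.mem_diff,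
      Set.mem_sep_iff] at hmem
    omega
  · rintro ⟨h1, h2, h3, h4⟩
    refine ⟨if x % 4 = 3 then x - 1 else x - 2, by split_ifs <;> omega, ?_⟩
    rw [algG_eq]
    simp only [blackAt, jacoArcSet, JacoArc, Blk, Set.mem_setOf_eq, Set.mem_diff,
      Set.mem_sep_iff]
    split_ifs with h <;> omega

/-- Let `a_i = i mod 4`.  For every `n ≥ 4`, the black arc number of the
finite Jaco-type graph `J_n((a_i))` equals `⌊n/2⌋ − 1`: the Jaco-type Black Arc Algorithm
applied to `J_n((a_i))` outputs exactly `⌊n/2⌋ − 1` black arcs. -/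
theorem mod4_blackArcNumber (n : ℕ) (hn : 4 ≤ n) :
    Set.ncard (blackSet (jacoArcSet (fun i => i % 4) n) n) = n / 2 - 1 := by
  rw [blackSet_eq n hn]
  have : {p : ℕ × ℕ | p.2 = p.1 + 1 ∧ 3 ≤ p.1 ∧ p.2 ≤ n ∧ p.1 % 2 = 1}
      = ↑((Finset.Icc 1 (n / 2 - 1)).image fun k => (2 * k + 1, 2 * k + 2)) := by
    ext ⟨x, y⟩
    simp only [Set.mem_setOf_eq, Finset.coe_image, Set.mem_image, Finset.mem_coe,
      Finset.mem_Icc, Prod.mk.injEq]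
    constructor
    · rintro ⟨h1, h2, h3, h4⟩
      obtain ⟨k, rfl⟩ : ∃ k, x = 2 * k + 1 := ⟨(x - 1) / 2, by omega⟩
      exact ⟨k, ⟨by omega, by omega⟩, by omega, by omega⟩
    · rintro ⟨k, hk, rfl, rfl⟩
      omega
  rw [this, Set.ncard_coe_finset, Finset.card_image_of_injective _ (fun a b h => by
    simp only [Prod.mk.injEq] at h; omega), Nat.card_Icc]
  omega
end

section
/- Let (a_i)_{i≥1} be a sequence of non-negative integers and n ≥ 2, and let G_1, …, G_{n−1} and B_1, …, B_{n−1} be as produced by the Jaco-type Black Arc Algorithm applied to J_n((a_i)). Then the black arc number satisfies b•(J_n((a_i))) = Σ_{i=1}^{n−1} h^p_{G_i*}(i), where G_i* denotes the underlying simple undirected graph of G_i and h^p_{G_i*}(i) is the primitive hole degree of vertex i in G_i*, i.e., the number of triangles of G_i* containing vertex i. -/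
/-- The adjacency relation of the underlying simple undirected graph of an arc set `A`. -/
def UndAdj (A : Set (ℕ × ℕ)) (u v : ℕ) : Prop :=
  (u, v) ∈ A ∨ (v, u) ∈ A

/-- The primitive hole degree `h^p_{A*}(v)`: the number of triangles containing vertex `v` in
the underlying undirected graph of the arc set `A` (each triangle `{v, u, w}` counted once,
via its pair `u < w`). -/
noncomputable def primitiveHoleDegree (A : Set (ℕ × ℕ)) (v : ℕ) : ℕ :=
  Set.ncard {p : ℕ × ℕ | p.1 < p.2 ∧ UndAdj A v p.1 ∧ UndAdj A v p.2 ∧ UndAdj A p.1 p.2}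

lemma algG_subset (A : Set (ℕ × ℕ)) : ∀ m, algG A m ⊆ A
  | 0 => subset_rfl
  | m + 1 => Set.diff_subset.trans (algG_subset A m)

lemma algG_antitone (A : Set (ℕ × ℕ)) {m k : ℕ} (h : m ≤ k) : algG A k ⊆ algG A m := by
  induction k with
  | zero => simp_all [Nat.le_zero.mp h]
  | succ k ih =>
    rcases Nat.lt_or_ge m (k + 1) with h' | h'
    · exact Set.diff_subset.trans (ih (Nat.lt_succ_iff.mp h'))
    · have : m = k + 1 := le_antisymm h h'
      subst this; exact subset_rfl

lemma jaco_forward {a : ℕ → ℕ} {n : ℕ} {p : ℕ × ℕ} (hp : p ∈ jacoArcSet a n) :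
    1 ≤ p.1 ∧ p.1 < p.2 ∧ p.2 ≤ n := by
  obtain ⟨h1, h2, h3, _⟩ := hp
  exact ⟨h1, h2, h3⟩

/-- No triangle of `algG A m` has smallest vertex `≤ m` (arcs go forward). -/
lemma algG_noTri {a : ℕ → ℕ} {n : ℕ} : ∀ m u v w, 1 ≤ u → u ≤ m →
    (u, v) ∈ algG (jacoArcSet a n) m → (u, w) ∈ algG (jacoArcSet a n) m →
    (v, w) ∈ algG (jacoArcSet a n) m → False := by
  intro m
  induction m with
  | zero => intro u v w h1 h0 _ _ _; omega
  | succ m ih =>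
    intro u v w h1 hle huv huw hvw
    rcases Nat.lt_or_ge u (m + 1) with h' | h'
    · exact ih u v w h1 (Nat.lt_succ_iff.mp h')
        (algG_antitone _ (Nat.le_succ m) huv)
        (algG_antitone _ (Nat.le_succ m) huw)
        (algG_antitone _ (Nat.le_succ m) hvw)
    · have hu : u = m + 1 := le_antisymm hle h'
      subst hu
      exact hvw.2 ⟨hvw.1, huv.1, huw.1⟩

lemma algG_forward {a : ℕ → ℕ} {n m : ℕ} {p : ℕ × ℕ}
    (hp : p ∈ algG (jacoArcSet a n) m) : 1 ≤ p.1 ∧ p.1 < p.2 ∧ p.2 ≤ n :=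
  jaco_forward (algG_subset _ m hp)

/-- `B_i` equals the triangle set counted by the primitive hole degree. -/
lemma blackAt_eq_triSet {a : ℕ → ℕ} {n i : ℕ} (hi : 1 ≤ i) :
    blackAt i (algG (jacoArcSet a n) (i - 1)) =
      {p : ℕ × ℕ | p.1 < p.2 ∧ UndAdj (algG (jacoArcSet a n) (i - 1)) i p.1 ∧
        UndAdj (algG (jacoArcSet a n) (i - 1)) i p.2 ∧
        UndAdj (algG (jacoArcSet a n) (i - 1)) p.1 p.2} := by
  set G := algG (jacoArcSet a n) (i - 1) with hG
  ext ⟨u, w⟩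
  constructor
  · rintro ⟨h1, h2, h3⟩
    exact ⟨(algG_forward h1).2.1, Or.inl h2, Or.inl h3, Or.inl h1⟩
  · rintro ⟨huw, hiu, hiw, huw'⟩
    simp only [Set.mem_setOf_eq] at *
    have huwG : (u, w) ∈ G := by
      rcases huw' with h | h
      · exact h
      · exact absurd (algG_forward h).2.1 (by omega)
    have hiuG : (i, u) ∈ G := by
      rcases hiu with h | h
      · exact h
      · -- (u, i) ∈ G, so u < i, giving a triangle with min u ≤ i - 1
        have hu1 : 1 ≤ u := (algG_forward h).1
        have hui : u < i := (algG_forward h).2.1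
        rcases hiw with h' | h'
        · -- (i, w) ∈ G : triangle u < i < w
          exact absurd (algG_noTri (i - 1) u i w hu1 (by omega) h
            (by exact huwG) (by
              have : i - 1 + 1 = i := by omega
              exact h')) (fun x => x)
        · -- (w, i) ∈ G : triangle u < w < i
          exact absurd (algG_noTri (i - 1) u w i hu1 (by omega) huwG h h') (fun x => x)
    have hiu' : i < u := (algG_forward hiuG).2.1
    have hiwG : (i, w) ∈ G := by
      rcases hiw with h | h
      · exact h
      · exact absurd (algG_forward h).2.1 (by omega)
    exact ⟨huwG, hiuG, hiwG⟩

lemma jacoArcSet_finite (a : ℕ → ℕ) (n : ℕ) : (jacoArcSet a n).Finite := by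
  apply Set.Finite.subset (Set.finite_Icc ((1, 1) : ℕ × ℕ) (n, n))
  rintro ⟨u, w⟩ hp
  obtain ⟨h1, h2, h3⟩ := jaco_forward hp
  constructor <;> constructor <;> simp <;> omega

lemma blackAt_disjoint_algG {a : ℕ → ℕ} {n i : ℕ} (hi : 1 ≤ i) :
    Disjoint (blackAt i (algG (jacoArcSet a n) (i - 1))) (algG (jacoArcSet a n) i) := by
  rw [Set.disjoint_left]
  intro p hp hp'
  have : i - 1 + 1 = i := by omega
  rw [← this] at hp'
  exact hp'.2 (by rw [this]; exact hp)

lemma ncard_biUnion_sum {f : ℕ → Set (ℕ × ℕ)} (s : Finset ℕ)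
    (hfin : ∀ i ∈ s, (f i).Finite)
    (hdisj : ∀ i ∈ s, ∀ j ∈ s, i ≠ j → Disjoint (f i) (f j)) :
    Set.ncard (⋃ i ∈ s, f i) = ∑ i ∈ s, Set.ncard (f i) := by
  classical
  induction s using Finset.induction_on with
  | empty => simp
  | @insert x s hx ih =>
    rw [Finset.set_biUnion_insert, Finset.sum_insert hx,
      Set.ncard_union_eq ?_ (hfin x (Finset.mem_insert_self x s)) ?_,
      ih (fun i hi => hfin i (Finset.mem_insert_of_mem hi))
        (fun i hi j hj hij =>
          hdisj i (Finset.mem_insert_of_mem hi) j (Finset.mem_insert_of_mem hj) hij)]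
    · rw [Set.disjoint_iUnion_right]
      intro i
      rw [Set.disjoint_iUnion_right]
      intro hi
      exact hdisj x (Finset.mem_insert_self x s) i (Finset.mem_insert_of_mem hi)
        (fun h => hx (h ▸ hi))
    · exact Set.Finite.biUnion (Set.finite_mem_finset s)
        (fun i hi => hfin i (Finset.mem_insert_of_mem hi))

/-- For a sequence `(a_i)` of non-negative integers and `n ≥ 2`, with
`G_1, …, G_{n−1}` and `B_1, …, B_{n−1}` produced by the Jaco-type Black Arc Algorithm applied
to `J_n((a_i))`, the black arc number satisfies
`b•(J_n((a_i))) = Σ_{i=1}^{n−1} h^p_{G_i*}(i)`, where `G_i* = algG _ (i−1)` viewed as an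
undirected graph and `h^p` counts triangles through the vertex `i`. -/
theorem blackArcNumber_eq_sum_primitiveHoleDegree (a : ℕ → ℕ) (n : ℕ) (hn : 2 ≤ n) :
    Set.ncard (blackSet (jacoArcSet a n) n) =
      ∑ i ∈ Finset.Icc 1 (n - 1), primitiveHoleDegree (algG (jacoArcSet a n) (i - 1)) i := by
  have hfin : ∀ i ∈ Finset.Icc 1 (n - 1),
      (blackAt i (algG (jacoArcSet a n) (i - 1))).Finite := fun i _ =>
    (jacoArcSet_finite a n).subset
      (fun p hp => algG_subset _ _ hp.1)
  have hdisj : ∀ i ∈ Finset.Icc 1 (n - 1), ∀ j ∈ Finset.Icc 1 (n - 1), i ≠ j →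
      Disjoint (blackAt i (algG (jacoArcSet a n) (i - 1)))
        (blackAt j (algG (jacoArcSet a n) (j - 1))) := by
    have key : ∀ i j : ℕ, 1 ≤ i → i < j →
        Disjoint (blackAt i (algG (jacoArcSet a n) (i - 1)))
          (blackAt j (algG (jacoArcSet a n) (j - 1))) := by
      intro i j hi hij
      refine Set.disjoint_left.mpr fun p hp hp' => ?_
      have h1 : p ∈ algG (jacoArcSet a n) (j - 1) := hp'.1
      have h2 : p ∈ algG (jacoArcSet a n) i :=
        algG_antitone _ (by omega) h1
      exact Set.disjoint_left.mp (blackAt_disjoint_algG hi) hp h2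
    intro i hi j hj hij
    simp only [Finset.mem_Icc] at hi hj
    rcases Nat.lt_or_ge i j with h | h
    · exact key i j hi.1 h
    · exact (key j i hj.1 (by omega)).symm
  rw [blackSet, ncard_biUnion_sum _ hfin hdisj]
  refine Finset.sum_congr rfl fun i hi => ?_
  simp only [Finset.mem_Icc] at hi
  rw [primitiveHoleDegree, blackAt_eq_triSet hi.1]
end

section
/- Let a_i = i (the sequence of natural numbers). For every N ≥ 1 and every vertex i ∈ {1, …, N} of the finite Jaco-type graph J_N((a_i)), the out-degree of vertex i equals min(i, N − i). In particular, for N = 2^{n+1} one has d⁺(i) = i for 1 ≤ i ≤ 2^n and d⁺(2^n + k) = 2^n − k for 1 ≤ k ≤ 2^n, which is exactly the out-degree sequence prescribed for the graphical embodiment 𝒢_n of the binary code of bit width n; hence 𝒢_n ≅ J_{2^{n+1}}((a_i)). -/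
/-- The out-degree prescribed for the graphical embodiment `𝒢_n` of the binary code of bit
width `n`: `d⁺(u_i) = b_i + 1 = i` for `1 ≤ i ≤ 2^n` and `d⁺(u_{2^n+k}) = 2^n − k` for
`1 ≤ k ≤ 2^n`. -/
def binCodeOutDeg (n i : ℕ) : ℕ :=
  if i ≤ 2 ^ n then i else 2 ^ n - (i - 2 ^ n)

/-- The graphical embodiment `𝒢_n` of the binary code of bit width `n`: the digraph on
vertices `1, …, 2^{n+1}` in which the out-neighbours of vertex `i` are the next
`binCodeOutDeg n i` vertices. -/
def BinCodeArc (n i j : ℕ) : Prop :=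
  1 ≤ i ∧ i < j ∧ j ≤ 2 ^ (n + 1) ∧ j ≤ i + binCodeOutDeg n i

lemma jaco_ncard (N i : ℕ) (hi : 1 ≤ i) :
    Set.ncard {j : ℕ | JacoArc (fun i => i) N i j} = min i (N - i) := by
  have hset : {j : ℕ | JacoArc (fun i => i) N i j} = ↑(Finset.Ioc i (min (i + i) N)) := by
    ext j
    simp only [JacoArc, Set.mem_setOf_eq, Finset.coe_Ioc, Set.mem_Ioc, le_min_iff]
    omega
  rw [hset, Set.ncard_coe_finset, Nat.card_Ioc]
  omega

/-- Let `a_i = i`.  For every `N ≥ 1` and every vertex `i ∈ {1, …, N}` of the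
finite Jaco-type graph `J_N((a_i))`, the out-degree of `i` equals `min(i, N − i)`.  In
particular, for `N = 2^{n+1}` one has `d⁺(i) = i` for `1 ≤ i ≤ 2^n` and
`d⁺(2^n + k) = 2^n − k` for `1 ≤ k ≤ 2^n`, which is exactly the out-degree sequence of the
graphical embodiment `𝒢_n` of the binary code of bit width `n`; hence
`𝒢_n ≅ J_{2^{n+1}}((a_i))` (indeed the two digraphs have the same arcs). -/
theorem jaco_nat_outDegree (N : ℕ) (hN : 1 ≤ N) (n : ℕ) :
    (∀ i : ℕ, 1 ≤ i → i ≤ N →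
      Set.ncard {j : ℕ | JacoArc (fun i => i) N i j} = min i (N - i)) ∧
    (∀ i : ℕ, 1 ≤ i → i ≤ 2 ^ n →
      Set.ncard {j : ℕ | JacoArc (fun i => i) (2 ^ (n + 1)) i j} = i) ∧
    (∀ k : ℕ, 1 ≤ k → k ≤ 2 ^ n →
      Set.ncard {j : ℕ | JacoArc (fun i => i) (2 ^ (n + 1)) (2 ^ n + k) j} = 2 ^ n - k) ∧
    (∀ i j : ℕ, BinCodeArc n i j ↔ JacoArc (fun i => i) (2 ^ (n + 1)) i j) := by
  refine ⟨fun i hi _ => jaco_ncard N i hi, fun i hi h2 => ?_, fun k hk h2 => ?_, fun i j => ?_⟩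
  · rw [jaco_ncard _ _ hi]
    have : 2 ^ (n + 1) = 2 * 2 ^ n := by ring
    omega
  · rw [jaco_ncard _ _ (by omega)]
    have : 2 ^ (n + 1) = 2 * 2 ^ n := by ring
    omega
  · simp only [BinCodeArc, JacoArc, binCodeOutDeg]
    have : 2 ^ (n + 1) = 2 * 2 ^ n := by ring
    split <;> omega
end
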